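/- arXiv:1903.05462 — 4 statements merged into one kernel-verified Lean document; each statement's English description precedes it below -/
import Mathlib

section
/- Let Δ ≥ 3, let λ ∈ ℂ with |λ| < (Δ−1)^{Δ−1}/Δ^Δ, and let B be the open disc of radius 1/Δ centered at 0. Then for every d ∈ {1,…,Δ−1} and every z in the closed disc of radius 1/Δ around 0, one has |λ/(1+z)^d| < 1/Δ; that is, each map f_{λ,d}(z) = λ/(1+z)^d maps the closed disc of radius 1/Δ strictly into the open disc B. -/
/-- For `|λ| < (Δ−1)^{Δ−1}/Δ^Δ`, each map `f_{λ,d}(z) = λ/(1+z)^d` with `1 ≤ d ≤ Δ−1`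
maps the closed disc of radius `1/Δ` around `0` strictly into the open disc of radius `1/Δ`. -/
theorem maps_disc_into_disc (Δ : ℕ) (hΔ : 3 ≤ Δ) (lam : ℂ)
    (hlam : ‖lam‖ < ((Δ : ℝ) - 1) ^ (Δ - 1) / (Δ : ℝ) ^ Δ)
    (d : ℕ) (hd1 : 1 ≤ d) (hd2 : d ≤ Δ - 1)
    (z : ℂ) (hz : ‖z‖ ≤ 1 / (Δ : ℝ)) :
    ‖lam / (1 + z) ^ d‖ < 1 / (Δ : ℝ) := by
  have hΔR : (3 : ℝ) ≤ (Δ : ℝ) := by exact_mod_cast hΔ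
  have hΔpos : (0 : ℝ) < (Δ : ℝ) := by linarith
  set r : ℝ := ((Δ : ℝ) - 1) / (Δ : ℝ) with hr
  have hrpos : 0 < r := div_pos (by linarith) hΔpos
  have hrle1 : r ≤ 1 := by
    rw [hr, div_le_one hΔpos]; linarith
  have h1z : r ≤ ‖1 + z‖ := by
    have h := norm_sub_norm_le (1 : ℂ) (-z)
    simp only [norm_one, norm_neg, sub_neg_eq_add] at h
    have h2 : r ≤ 1 - ‖z‖ := by
      rw [hr]
      have : ((Δ:ℝ)-1)/(Δ:ℝ) = 1 - 1/(Δ:ℝ) := by field_simp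
      rw [this]; linarith
    calc r ≤ 1 - ‖z‖ := h2
      _ ≤ ‖(1:ℂ) + z‖ := h
      _ = ‖1 + z‖ := rfl
  have hpow : r ^ d ≤ ‖(1 + z) ^ d‖ := by
    rw [norm_pow]
    exact pow_le_pow_left₀ hrpos.le h1z d
  have hpow2 : r ^ (Δ - 1) ≤ r ^ d := pow_le_pow_of_le_one hrpos.le hrle1 hd2
  have hpowpos : 0 < r ^ (Δ - 1) := by positivity
  have hdenpos : 0 < ‖(1 + z) ^ d‖ := lt_of_lt_of_le (by positivity) hpow
  rw [norm_div]
  rw [div_lt_iff₀ hdenpos]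
  have key : (((Δ : ℝ) - 1) ^ (Δ - 1) / (Δ : ℝ) ^ Δ) = (1 / (Δ : ℝ)) * r ^ (Δ - 1) := by
    rw [hr, div_pow]
    have hΔ' : Δ = (Δ - 1) + 1 := by omega
    rw [hΔ', pow_succ]
    have h1 : ((Δ:ℝ)) ^ (Δ - 1) ≠ 0 := by positivity
    field_simp
    ring_nf
    rw [show 1 + (Δ - 1) - 1 = Δ - 1 by omega]
  calc ‖lam‖ < ((Δ : ℝ) - 1) ^ (Δ - 1) / (Δ : ℝ) ^ Δ := hlam
    _ = (1 / (Δ : ℝ)) * r ^ (Δ - 1) := key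
    _ ≤ (1 / (Δ : ℝ)) * r ^ d := by
        apply mul_le_mul_of_nonneg_left hpow2 (by positivity)
    _ ≤ (1 / (Δ : ℝ)) * ‖(1 + z) ^ d‖ := by
        apply mul_le_mul_of_nonneg_left hpow (by positivity)
end

section
/- Let Δ ≥ 3, λ ∈ ℂ∖{0} with |λ| < (Δ−1)^{Δ−1}/Δ^Δ, d ∈ {1,…,Δ−1}, and let z ∈ ℂ with |z+1| < (Δ−1)/Δ. Then for every w ∈ ℂ with w^d = λ/z (a d-th root), one has |w| < (Δ−1)/Δ. Equivalently, every inverse branch h_i^{−1} of h(z) = λ/z^d on the disc of radius (Δ−1)/Δ around −1 satisfies |h_i^{−1}(z)| < (Δ−1)/Δ. -/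
/-- For `0 < |λ| < (Δ−1)^{Δ−1}/Δ^Δ`, `1 ≤ d ≤ Δ−1` and `z` in the disc of radius `(Δ−1)/Δ`
around `−1`, every `d`-th root `w` of `λ/z` satisfies `|w| < (Δ−1)/Δ`; i.e. every inverse
branch of `h(z) = λ/z^d` maps this disc into the disc of radius `(Δ−1)/Δ` around `0`. -/
theorem inverse_branch_bound (Δ : ℕ) (hΔ : 3 ≤ Δ) (lam : ℂ) (hlam0 : lam ≠ 0)
    (hlam : ‖lam‖ < ((Δ : ℝ) - 1) ^ (Δ - 1) / (Δ : ℝ) ^ Δ)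
    (d : ℕ) (hd1 : 1 ≤ d) (hd2 : d ≤ Δ - 1)
    (z w : ℂ) (hz : ‖z + 1‖ < ((Δ : ℝ) - 1) / (Δ : ℝ))
    (hw : w ^ d = lam / z) :
    ‖w‖ < ((Δ : ℝ) - 1) / (Δ : ℝ) := by
  have hΔR : (3 : ℝ) ≤ (Δ : ℝ) := by exact_mod_cast hΔ
  have hΔ0 : (0 : ℝ) < (Δ : ℝ) := by linarith
  set r : ℝ := ((Δ : ℝ) - 1) / (Δ : ℝ) with hr
  have hr0 : 0 < r := by rw [hr]; apply div_pos <;> linarith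
  have hr1 : r < 1 := by
    rw [hr, div_lt_one hΔ0]; linarith
  -- |z| > 1/Δ
  have hzlow : 1 / (Δ : ℝ) < ‖z‖ := by
    have h1 : (1 : ℝ) ≤ ‖z + 1‖ + ‖z‖ := by
      have := norm_add_le (z + 1) (-z)
      simpa using this
    have h2 : (1 : ℝ) - r = 1 / (Δ : ℝ) := by
      rw [hr]; field_simp; ring
    linarith
  have hz0 : 0 < ‖z‖ := lt_trans (by positivity) hzlow
  -- key: |w|^d < r^(Δ-1)
  have hkey : ‖w‖ ^ d < r ^ (Δ - 1) := by
    have habs : ‖w‖ ^ d = ‖lam‖ / ‖z‖ := by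
      rw [← norm_pow, hw, norm_div]
    rw [habs]
    have hΔsplit : (Δ : ℝ) ^ Δ = (Δ : ℝ) ^ (Δ - 1) * (Δ : ℝ) := by
      rw [← pow_succ]
      congr 1
      omega
    have hrpow : r ^ (Δ - 1) = ((Δ : ℝ) - 1) ^ (Δ - 1) / (Δ : ℝ) ^ (Δ - 1) := by
      rw [hr, div_pow]
    rw [div_lt_iff₀ hz0]
    calc ‖lam‖ < ((Δ : ℝ) - 1) ^ (Δ - 1) / (Δ : ℝ) ^ Δ := hlam
      _ = r ^ (Δ - 1) * (1 / (Δ : ℝ)) := by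
          rw [hrpow, hΔsplit]; field_simp
      _ ≤ r ^ (Δ - 1) * ‖z‖ := by
          apply mul_le_mul_of_nonneg_left (le_of_lt hzlow) (by positivity)
  have hmono : r ^ (Δ - 1) ≤ r ^ d :=
    pow_le_pow_of_le_one (le_of_lt hr0) (le_of_lt hr1) hd2
  exact lt_of_pow_lt_pow_left₀ d (le_of_lt hr0) (lt_of_lt_of_le hkey hmono)
end

section
/- Let f be a holomorphic family of rational maps parameterized by a domain Ω ⊆ ℂ, given by f_λ(z) = p(λ,z)/q(λ,z) with p, q ∈ ℂ[λ,z] coprime in ℂ(λ)[z]. Suppose for some λ₀ ∈ Ω there is a neighborhood U of λ₀ and a holomorphic map w : U → ℂ with f_λ(w(λ)) = w(λ) and |f_λ'(w(λ))| = 1 for all λ ∈ U. Then for all but finitely many λ ∈ ℂ, the rational map p(λ,·)/q(λ,·) has an indifferent fixed point (a fixed point with multiplier of absolute value exactly 1). -/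
/-- The rational family `f_λ(z) = p(λ,z)/q(λ,z)` obtained by specializing `λ`. -/
noncomputable def Ffam (p q : Polynomial (Polynomial ℂ)) (l z : ℂ) : ℂ :=
  (p.map (Polynomial.evalRingHom l)).eval z / (q.map (Polynomial.evalRingHom l)).eval z

open Polynomial Filter Topology

namespace PersistAux

noncomputable abbrev φ : Polynomial ℂ →+* RatFunc ℂ := algebraMap (Polynomial ℂ) (RatFunc ℂ)

lemma phi_inj : Function.Injective φ := IsFractionRing.injective _ _

lemma map_phi_inj : Function.Injective (Polynomial.map φ) :=
  Polynomial.map_injective _ phi_inj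

lemma exists_num (a : Polynomial (RatFunc ℂ)) :
    ∃ (A : Polynomial (Polynomial ℂ)) (c : Polynomial ℂ), c ≠ 0 ∧
      A.map φ = Polynomial.C (φ c) * a := by
  obtain ⟨b, hb⟩ := IsLocalization.integerNormalization_map_to_map
    (nonZeroDivisors (Polynomial ℂ)) a
  refine ⟨IsLocalization.integerNormalization (nonZeroDivisors (Polynomial ℂ)) a, b,
    nonZeroDivisors.coe_ne_zero b, ?_⟩
  rw [hb, ← IsScalarTower.algebraMap_smul (RatFunc ℂ) ((b : Polynomial ℂ)) a,
    smul_eq_C_mul]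

lemma exists_comb {f g : Polynomial (Polynomial ℂ)}
    (h : IsCoprime (f.map φ) (g.map φ)) :
    ∃ (A B : Polynomial (Polynomial ℂ)) (c : Polynomial ℂ), c ≠ 0 ∧
      A * f + B * g = Polynomial.C c := by
  obtain ⟨a, b, hab⟩ := h
  obtain ⟨A, ca, hca, hA⟩ := exists_num a
  obtain ⟨B, cb, hcb, hB⟩ := exists_num b
  refine ⟨Polynomial.C cb * A, Polynomial.C ca * B, ca * cb,
    mul_ne_zero hca hcb, map_phi_inj ?_⟩
  simp only [Polynomial.map_add, Polynomial.map_mul, Polynomial.map_C, hA, hB, map_mul, C_mul]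
  calc Polynomial.C (φ cb) * (Polynomial.C (φ ca) * a) * f.map φ +
        Polynomial.C (φ ca) * (Polynomial.C (φ cb) * b) * g.map φ
      = Polynomial.C (φ ca) * Polynomial.C (φ cb) * (a * f.map φ + b * g.map φ) := by ring
    _ = Polynomial.C (φ ca) * Polynomial.C (φ cb) := by rw [hab, mul_one]

lemma exists_factor {d : Polynomial (RatFunc ℂ)} {D : Polynomial (Polynomial ℂ)}
    {c₁ : Polynomial ℂ} (hc₁ : c₁ ≠ 0) (hD : D.map φ = Polynomial.C (φ c₁) * d)
    {f : Polynomial (Polynomial ℂ)} (hdvd : d ∣ f.map φ) :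
    ∃ (E : Polynomial (Polynomial ℂ)) (c₂ : Polynomial ℂ), c₂ ≠ 0 ∧
      D * E = Polynomial.C c₂ * f := by
  obtain ⟨u, hu⟩ := hdvd
  obtain ⟨E, cu, hcu, hE⟩ := exists_num u
  refine ⟨E, c₁ * cu, mul_ne_zero hc₁ hcu, map_phi_inj ?_⟩
  rw [Polynomial.map_mul, hD, hE, Polynomial.map_mul, Polynomial.map_C, map_mul, C_mul]
  calc Polynomial.C (φ c₁) * d * (Polynomial.C (φ cu) * u)
      = Polynomial.C (φ c₁) * Polynomial.C (φ cu) * (d * u) := by ring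
    _ = _ := by rw [← hu]

noncomputable def evE (l z : ℂ) : Polynomial (Polynomial ℂ) →+* ℂ :=
  (Polynomial.evalRingHom z).comp (Polynomial.mapRingHom (Polynomial.evalRingHom l))

lemma evE_apply (l z : ℂ) (r : Polynomial (Polynomial ℂ)) :
    evE l z r = (r.map (Polynomial.evalRingHom l)).eval z := rfl

@[simp] lemma evE_X (l z : ℂ) : evE l z Polynomial.X = z := by
  simp [evE_apply]

@[simp] lemma evE_C (l z : ℂ) (c : Polynomial ℂ) :
    evE l z (Polynomial.C c) = c.eval l := by
  simp [evE_apply]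

lemma diffOn_evalEval (r : Polynomial (Polynomial ℂ)) {w : ℂ → ℂ} {U : Set ℂ}
    (hw : DifferentiableOn ℂ w U) :
    DifferentiableOn ℂ (fun l => evE l (w l) r) U := by
  have hrepr : (fun l => evE l (w l) r) =
      fun l => ∑ i ∈ Finset.range (r.natDegree + 1), (r.coeff i).eval l * w l ^ i := by
    funext l
    rw [evE_apply, Polynomial.eval_map, Polynomial.eval₂_eq_sum_range]
    rfl
  rw [hrepr]
  apply DifferentiableOn.fun_sum
  intro i _
  exact ((r.coeff i).differentiable.differentiableOn).mul (hw.pow i)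

lemma deriv_Ffam (p q : Polynomial (Polynomial ℂ)) (l z : ℂ)
    (hq : (q.map (Polynomial.evalRingHom l)).eval z ≠ 0) :
    deriv (Ffam p q l) z =
      evE l z (p.derivative * q - p * q.derivative) /
        ((q.map (Polynomial.evalRingHom l)).eval z) ^ 2 := by
  have h1 : Ffam p q l = fun x =>
      (p.map (Polynomial.evalRingHom l)).eval x / (q.map (Polynomial.evalRingHom l)).eval x := rfl
  have hP : DifferentiableAt ℂ (fun x => (p.map (Polynomial.evalRingHom l)).eval x) z :=
    Polynomial.differentiableAt _
  have hQ : DifferentiableAt ℂ (fun x => (q.map (Polynomial.evalRingHom l)).eval x) z :=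
    Polynomial.differentiableAt _
  rw [h1, deriv_fun_div hP hQ hq, Polynomial.deriv, Polynomial.deriv]
  simp only [evE_apply, Polynomial.map_sub, Polynomial.map_mul,
    Polynomial.eval_sub, Polynomial.eval_mul, Polynomial.derivative_map]

end PersistAux

open PersistAux

/-- If a holomorphic family of rational maps `f_λ = p(λ,·)/q(λ,·)`, with `p, q` coprime in
`ℂ(λ)[z]`, has a persistently indifferent fixed point over a neighborhood `U` of some `λ₀`,
then for all but finitely many `λ ∈ ℂ` the map `f_λ` has an indifferent fixed point. -/
theorem persistently_indifferent_spreads (p q : Polynomial (Polynomial ℂ))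
    (hcop : IsCoprime (p.map (algebraMap (Polynomial ℂ) (RatFunc ℂ)))
        (q.map (algebraMap (Polynomial ℂ) (RatFunc ℂ))))
    (U : Set ℂ) (hUopen : IsOpen U) (lam₀ : ℂ) (hlam₀ : lam₀ ∈ U)
    (w : ℂ → ℂ) (hw : DifferentiableOn ℂ w U)
    (hfix : ∀ l ∈ U, Ffam p q l (w l) = w l)
    (hmult : ∀ l ∈ U, ‖deriv (Ffam p q l) (w l)‖ = 1) :
    {l : ℂ | ¬ ∃ z : ℂ, Ffam p q l z = z ∧
        ‖deriv (Ffam p q l) z‖ = 1}.Finite := by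
  classical
  obtain ⟨A0, B0, c0, hc0, hid0⟩ := exists_comb hcop
  obtain ⟨ε, hε, hball⟩ := Metric.isOpen_iff.mp hUopen lam₀ hlam₀
  by_cases hcase : ∀ l ∈ Metric.ball lam₀ ε, evE l (w l) q = 0
  · -- degenerate case: the denominator vanishes identically at the fixed point; contradiction
    exfalso
    have hw0 : ∀ l ∈ Metric.ball lam₀ ε, w l = 0 := by
      intro l hl
      have h1 := hfix l (hball hl)
      have h2 : Ffam p q l (w l) = evE l (w l) p / evE l (w l) q := rfl
      rw [h2, hcase l hl, div_zero] at h1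
      exact h1.symm
    have hballinf : (Metric.ball lam₀ ε).Infinite :=
      infinite_of_mem_nhds lam₀ (Metric.ball_mem_nhds _ hε)
    have hq0 : q.coeff 0 = 0 := by
      apply Polynomial.eq_zero_of_infinite_isRoot
      apply hballinf.mono
      intro l hl
      have h3 : evE l (w l) q = (q.coeff 0).eval l := by
        rw [hw0 l hl, evE_apply, ← Polynomial.coeff_zero_eq_eval_zero,
          Polynomial.coeff_map]
        rfl
      have h4 := hcase l hl
      rw [h3] at h4
      exact h4
    by_cases hp0 : p.coeff 0 = 0
    · have hdp : (Polynomial.X : Polynomial (Polynomial ℂ)) ∣ p := Polynomial.X_dvd_iff.mpr hp0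
      have hdq : (Polynomial.X : Polynomial (Polynomial ℂ)) ∣ q := Polynomial.X_dvd_iff.mpr hq0
      have h1 : (Polynomial.X : Polynomial (RatFunc ℂ)) ∣ p.map φ := by
        simpa using map_dvd (Polynomial.mapRingHom φ) hdp
      have h2 : (Polynomial.X : Polynomial (RatFunc ℂ)) ∣ q.map φ := by
        simpa using map_dvd (Polynomial.mapRingHom φ) hdq
      exact Polynomial.not_isUnit_X (hcop.isUnit_of_dvd' h1 h2)
    · obtain ⟨l₂, hl₂ball, hl₂⟩ := (hballinf.diff (Polynomial.finite_setOf_isRoot hp0)).nonempty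
      have hwl₂ : w l₂ = 0 := hw0 _ hl₂ball
      have hP0 : (p.map (Polynomial.evalRingHom l₂)).eval 0 ≠ 0 := by
        rw [← Polynomial.coeff_zero_eq_eval_zero, Polynomial.coeff_map]
        exact hl₂
      have hQ0 : (q.map (Polynomial.evalRingHom l₂)).eval 0 = 0 := by
        have h5 := hcase l₂ hl₂ball
        rwa [hwl₂, evE_apply] at h5
      have hm := hmult l₂ (hball hl₂ball)
      rw [hwl₂] at hm
      by_cases hQz : q.map (Polynomial.evalRingHom l₂) = 0
      · have h6 : Ffam p q l₂ = fun _ => (0:ℂ) := by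
          funext z
          show (p.map (Polynomial.evalRingHom l₂)).eval z /
            (q.map (Polynomial.evalRingHom l₂)).eval z = 0
          rw [hQz]
          simp
        rw [h6] at hm
        simp at hm
      · have hnd : ¬ DifferentiableAt ℂ (Ffam p q l₂) 0 := by
          intro hdiff
          set Q := q.map (Polynomial.evalRingHom l₂) with hQdef
          set P := p.map (Polynomial.evalRingHom l₂) with hPdef
          set t : Set ℂ := {z | Q.eval z = 0} with ht
          have htfin : t.Finite := Polynomial.finite_setOf_isRoot hQz
          set s : Set ℂ := {z | Q.eval z ≠ 0} with hs
          have hsub : {(0:ℂ)}ᶜ ∩ (t \ {0})ᶜ ⊆ s := by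
            intro z hz
            simp only [Set.mem_inter_iff, Set.mem_compl_iff, Set.mem_singleton_iff,
              Set.mem_diff, not_and, not_not] at hz
            intro hzero
            exact hz.1 (hz.2 hzero)
          have hmem : (t \ {0})ᶜ ∈ 𝓝 (0:ℂ) :=
            ((htfin.subset Set.diff_subset).isClosed).compl_mem_nhds (by simp)
          have hne1 : (𝓝[{(0:ℂ)}ᶜ ∩ (t \ {0})ᶜ] (0:ℂ)).NeBot := by
            rw [nhdsWithin_inter_of_mem' (mem_nhdsWithin_of_mem_nhds hmem)]
            infer_instance
          have hne : (𝓝[s] (0:ℂ)).NeBot := hne1.mono (nhdsWithin_mono _ hsub)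
          have hQtend : Filter.Tendsto (fun z => ‖Q.eval z‖) (𝓝[s] (0:ℂ)) (𝓝[>] 0) := by
            rw [tendsto_nhdsWithin_iff]
            constructor
            · have h7 : Filter.Tendsto (fun z => ‖Q.eval z‖) (𝓝 (0:ℂ)) (𝓝 ‖Q.eval 0‖) :=
                (Q.continuous.norm.tendsto 0)
              rw [hQ0, norm_zero] at h7
              exact h7.mono_left nhdsWithin_le_nhds
            · filter_upwards [self_mem_nhdsWithin] with z hz
              exact Set.mem_Ioi.mpr (norm_pos_iff.mpr hz)
          have hinv : Filter.Tendsto (fun z => ‖Q.eval z‖⁻¹) (𝓝[s] (0:ℂ)) Filter.atTop :=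
            tendsto_inv_nhdsGT_zero.comp hQtend
          have hPt : Filter.Tendsto (fun z => ‖P.eval z‖) (𝓝[s] (0:ℂ)) (𝓝 ‖P.eval 0‖) :=
            (P.continuous.norm.tendsto 0).mono_left nhdsWithin_le_nhds
          have hblow : Filter.Tendsto (fun z => ‖Ffam p q l₂ z‖) (𝓝[s] (0:ℂ))
              Filter.atTop := by
            apply (Filter.Tendsto.pos_mul_atTop (norm_pos_iff.mpr hP0) hPt hinv).congr
            intro z
            show ‖P.eval z‖ * ‖Q.eval z‖⁻¹ = ‖P.eval z / Q.eval z‖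
            rw [norm_div, div_eq_mul_inv]
          have hcn : Filter.Tendsto (fun z => ‖Ffam p q l₂ z‖) (𝓝[s] (0:ℂ))
              (𝓝 ‖Ffam p q l₂ 0‖) :=
            (hdiff.continuousAt.tendsto.mono_left nhdsWithin_le_nhds).norm
          exact not_tendsto_atTop_of_tendsto_nhds hcn hblow
        rw [deriv_zero_of_not_differentiableAt hnd] at hm
        simp at hm
  · -- main case
    push_neg at hcase
    obtain ⟨l₁, hl₁ball, hel₁⟩ := hcase
    have hl₁U : l₁ ∈ U := hball hl₁ball
    have heCont : ContinuousOn (fun l => evE l (w l) q) U :=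
      (diffOn_evalEval q hw).continuousOn
    have hVopen : IsOpen (U ∩ (fun l => evE l (w l) q) ⁻¹' {(0:ℂ)}ᶜ) :=
      heCont.isOpen_inter_preimage hUopen isOpen_compl_singleton
    obtain ⟨r₁, hr₁, hB'sub⟩ := Metric.isOpen_iff.mp hVopen l₁ ⟨hl₁U, by simpa using hel₁⟩
    have hB'U : Metric.ball l₁ r₁ ⊆ U := fun x hx => (hB'sub hx).1
    have hB'e : ∀ l ∈ Metric.ball l₁ r₁, evE l (w l) q ≠ 0 := fun x hx => by
      have := (hB'sub hx).2
      simpa using this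
    set S := p.derivative * q - p * q.derivative with hSdef
    set g : ℂ → ℂ := fun l => evE l (w l) S / (evE l (w l) q) ^ 2 with hgdef
    have hgdiff : DifferentiableOn ℂ g (Metric.ball l₁ r₁) := by
      apply DifferentiableOn.div
      · exact (diffOn_evalEval S hw).mono hB'U
      · exact ((diffOn_evalEval q hw).mono hB'U).pow 2
      · intro x hx
        exact pow_ne_zero 2 (hB'e x hx)
    have hgval : ∀ l ∈ Metric.ball l₁ r₁, deriv (Ffam p q l) (w l) = g l := by
      intro l hl
      exact deriv_Ffam p q l (w l) (hB'e l hl)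
    have hgabs : ∀ l ∈ Metric.ball l₁ r₁, ‖g l‖ = 1 := by
      intro l hl
      rw [← hgval l hl]
      exact hmult l (hB'U hl)
    have hl₁B' : l₁ ∈ Metric.ball l₁ r₁ := Metric.mem_ball_self hr₁
    set α := g l₁ with hαdef
    have habsα : ‖α‖ = 1 := hgabs l₁ hl₁B'
    have hgconst : ∀ l ∈ Metric.ball l₁ r₁, g l = α := by
      have hmax : IsMaxOn (norm ∘ g) (Metric.ball l₁ r₁) l₁ := by
        apply isMaxOn_iff.mpr
        intro x hx
        simp only [Function.comp_apply, hgabs x hx, habsα]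
        exact (hgabs l₁ hl₁B').ge
      have := Complex.eqOn_of_isPreconnected_of_isMaxOn_norm
        (convex_ball l₁ r₁).isPreconnected Metric.isOpen_ball hgdiff hl₁B' hmax
      intro l hl
      exact this hl
    have hB'inf : (Metric.ball l₁ r₁).Infinite :=
      infinite_of_mem_nhds l₁ (Metric.ball_mem_nhds _ hr₁)
    set L := p - Polynomial.X * q with hLdef
    set M := S - Polynomial.C (Polynomial.C α) * q ^ 2 with hMdef
    have hFL : ∀ l ∈ Metric.ball l₁ r₁, evE l (w l) L = 0 := by
      intro l hl
      have h1 := hfix l (hB'U hl)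
      have h2 : evE l (w l) p / evE l (w l) q = w l := h1
      have h3 : evE l (w l) p = w l * evE l (w l) q := (div_eq_iff (hB'e l hl)).mp h2
      rw [hLdef, map_sub, map_mul, evE_X, h3, sub_self]
    have hFM : ∀ l ∈ Metric.ball l₁ r₁, evE l (w l) M = 0 := by
      intro l hl
      have h4 : evE l (w l) S = α * (evE l (w l) q) ^ 2 :=
        (div_eq_iff (pow_ne_zero 2 (hB'e l hl))).mp (hgconst l hl)
      rw [hMdef, map_sub, map_mul, map_pow, evE_C, Polynomial.eval_C, h4]
      ring
    by_cases hL0 : L = 0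
    · -- f is the identity map
      have hpXq : p = Polynomial.X * q := by
        have := hL0
        rwa [hLdef, sub_eq_zero] at this
      have hq_ne : q ≠ 0 := by
        rintro rfl
        rw [mul_zero] at hpXq
        rw [hpXq] at hcop
        simp only [Polynomial.map_zero] at hcop
        exact not_isCoprime_zero_zero hcop
      have hdvd : q.map φ ∣ p.map φ :=
        ⟨Polynomial.X, by rw [hpXq, Polynomial.map_mul, Polynomial.map_X]; ring⟩
      have hunit : IsUnit (q.map φ) := hcop.isUnit_of_dvd' hdvd dvd_rfl
      have hdeg : q.degree = 0 := by
        have h1 := Polynomial.isUnit_iff_degree_eq_zero.mp hunit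
        rwa [Polynomial.degree_map_eq_of_injective phi_inj] at h1
      have hqC : q = Polynomial.C (q.coeff 0) := Polynomial.eq_C_of_degree_le_zero hdeg.le
      have hc₀ : q.coeff 0 ≠ 0 := by
        intro h
        rw [h, map_zero] at hqC
        exact hq_ne hqC
      apply Set.Finite.subset (Polynomial.finite_setOf_isRoot hc₀)
      intro l hl
      simp only [Set.mem_setOf_eq] at hl ⊢
      by_contra hroot
      apply hl
      have hcl : (q.coeff 0).eval l ≠ 0 := hroot
      have hFf : Ffam p q l = fun z => z := by
        funext z
        show (p.map (Polynomial.evalRingHom l)).eval z /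
          (q.map (Polynomial.evalRingHom l)).eval z = z
        rw [hpXq, hqC]
        simp only [Polynomial.map_mul, Polynomial.map_X, Polynomial.map_C,
          Polynomial.eval_mul, Polynomial.eval_X, Polynomial.eval_C]
        rw [mul_div_assoc, div_self (by exact hcl), mul_one]
      refine ⟨0, ?_, ?_⟩
      · rw [hFf]
      · rw [hFf]
        simp
    · have hLmap : L.map φ ≠ 0 := by
        intro hh
        apply hL0
        apply map_phi_inj
        simpa using hh
      have hncop : ¬ IsCoprime (L.map φ) (M.map φ) := by
        intro hcop'
        obtain ⟨A1, B1, c, hc, hid⟩ := exists_comb hcop'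
        obtain ⟨l', hl'B', hl'⟩ :=
          (hB'inf.diff (Polynomial.finite_setOf_isRoot hc)).nonempty
        have hev := congrArg (evE l' (w l')) hid
        rw [map_add, map_mul, map_mul, hFL l' hl'B', hFM l' hl'B', evE_C,
          mul_zero, mul_zero, add_zero] at hev
        exact hl' hev.symm
      set d := EuclideanDomain.gcd (L.map φ) (M.map φ) with hd
      have hdunit : ¬ IsUnit d := fun hu => hncop (EuclideanDomain.gcd_isUnit_iff.mp hu)
      have hd0 : d ≠ 0 := fun h0 => hLmap ((EuclideanDomain.gcd_eq_zero_iff.mp h0).1)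
      have hddeg : 0 < d.degree :=
        lt_of_le_of_ne (Polynomial.zero_le_degree_iff.mpr hd0)
          (fun h => hdunit (Polynomial.isUnit_iff_degree_eq_zero.mpr h.symm))
      obtain ⟨D, c₁, hc₁, hD⟩ := exists_num d
      obtain ⟨E₁, c₂, hc₂, hDE₁⟩ := exists_factor hc₁ hD (EuclideanDomain.gcd_dvd_left _ _)
      obtain ⟨E₂, c₃, hc₃, hDE₂⟩ := exists_factor hc₁ hD (EuclideanDomain.gcd_dvd_right _ _)
      have hDdeg : 0 < D.degree := by
        have h1 : (D.map φ).degree = d.degree := by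
          rw [hD, Polynomial.degree_C_mul ((map_ne_zero_iff _ phi_inj).mpr hc₁)]
        rw [Polynomial.degree_map_eq_of_injective phi_inj] at h1
        rw [h1]
        exact hddeg
      have hDlc : D.leadingCoeff ≠ 0 := by
        apply Polynomial.leadingCoeff_ne_zero.mpr
        intro h
        rw [h] at hDdeg
        simp at hDdeg
      have hcbad0 : c0 * (c₂ * (c₃ * D.leadingCoeff)) ≠ 0 :=
        mul_ne_zero hc0 (mul_ne_zero hc₂ (mul_ne_zero hc₃ hDlc))
      apply Set.Finite.subset (Polynomial.finite_setOf_isRoot hcbad0)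
      intro l hl
      simp only [Set.mem_setOf_eq] at hl ⊢
      by_contra hroot
      apply hl
      have heval : (c0 * (c₂ * (c₃ * D.leadingCoeff))).eval l ≠ 0 := hroot
      simp only [Polynomial.eval_mul] at heval
      obtain ⟨h0, h23lc⟩ := mul_ne_zero_iff.mp heval
      obtain ⟨h2, h3lc⟩ := mul_ne_zero_iff.mp h23lc
      obtain ⟨h3, hlc⟩ := mul_ne_zero_iff.mp h3lc
      have hDl : 0 < (D.map (Polynomial.evalRingHom l)).degree := by
        rwa [Polynomial.degree_map_eq_of_leadingCoeff_ne_zero _ hlc]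
      obtain ⟨z₀, hz₀⟩ := Complex.exists_root hDl
      have hevD : evE l z₀ D = 0 := hz₀
      have hevL : evE l z₀ L = 0 := by
        have hev := congrArg (evE l z₀) hDE₁
        rw [map_mul, map_mul, evE_C, hevD, zero_mul] at hev
        exact (mul_eq_zero.mp hev.symm).resolve_left h2
      have hevM : evE l z₀ M = 0 := by
        have hev := congrArg (evE l z₀) hDE₂
        rw [map_mul, map_mul, evE_C, hevD, zero_mul] at hev
        exact (mul_eq_zero.mp hev.symm).resolve_left h3
      have hPz : evE l z₀ p = z₀ * evE l z₀ q := by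
        apply sub_eq_zero.mp
        have := hevL
        rwa [hLdef, map_sub, map_mul, evE_X] at this
      have heQ0 : evE l z₀ q ≠ 0 := by
        intro h'
        have hp' : evE l z₀ p = 0 := by rw [hPz, h', mul_zero]
        have hev := congrArg (evE l z₀) hid0
        rw [map_add, map_mul, map_mul, hp', h', mul_zero, mul_zero, add_zero, evE_C] at hev
        exact h0 hev.symm
      refine ⟨z₀, ?_, ?_⟩
      · show evE l z₀ p / evE l z₀ q = z₀
        rw [hPz, mul_div_assoc, div_self heQ0, mul_one]
      · have hSz : evE l z₀ S = α * (evE l z₀ q) ^ 2 := by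
          apply sub_eq_zero.mp
          have := hevM
          rwa [hMdef, map_sub, map_mul, map_pow, evE_C, Polynomial.eval_C] at this
        rw [deriv_Ffam p q l z₀ heQ0]
        show ‖evE l z₀ S / (evE l z₀ q) ^ 2‖ = 1
        rw [hSz, mul_div_assoc, div_self (pow_ne_zero 2 heQ0), mul_one]
        exact habsα
end

section
/- Let Δ ≥ 3 and define U_Δ = { −α·(Δ−1)^{Δ−1}/(Δ−1+α)^Δ : |α| < 1 } ⊆ ℂ. Then the open disc of radius (Δ−1)^{Δ−1}/Δ^Δ centered at 0 is contained in U_Δ. -/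
open Set Metric

/-- The region `U_Δ`, the image of the open unit disc under
`α ↦ −α·(Δ−1)^{Δ−1}/(Δ−1+α)^Δ`. -/
def Uregion (Δ : ℕ) : Set ℂ :=
  {w : ℂ | ∃ α : ℂ, ‖α‖ < 1 ∧
    w = -α * ((Δ : ℂ) - 1) ^ (Δ - 1) / ((Δ : ℂ) - 1 + α) ^ Δ}

/-- The open disc of radius `(Δ−1)^{Δ−1}/Δ^Δ` centered at `0` is contained in `U_Δ`. -/
theorem disc_subset_U (Δ : ℕ) (hΔ : 3 ≤ Δ) (w : ℂ)
    (hw : ‖w‖ < ((Δ : ℝ) - 1) ^ (Δ - 1) / (Δ : ℝ) ^ Δ) :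
    w ∈ Uregion Δ := by
  set dC : ℂ := (Δ : ℂ) - 1 with hdC
  set φ : ℂ → ℂ := fun α => -α * dC ^ (Δ - 1) / (dC + α) ^ Δ with hφdef
  set m : ℝ := ((Δ : ℝ) - 1) ^ (Δ - 1) / (Δ : ℝ) ^ Δ with hm
  have hΔR : (3 : ℝ) ≤ (Δ : ℝ) := by exact_mod_cast hΔ
  have habs_d : ‖dC‖ = (Δ : ℝ) - 1 := by
    rw [hdC, show (Δ : ℂ) - 1 = (((Δ : ℝ) - 1 : ℝ) : ℂ) by push_cast; ring,
      Complex.norm_real, Real.norm_eq_abs, abs_of_nonneg (by linarith)]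
  have hdC0 : dC ≠ 0 := by
    intro h
    rw [h, norm_zero] at habs_d; linarith
  -- denominator is nonzero on the closed unit ball
  have hne : ∀ α : ℂ, ‖α‖ ≤ 1 → dC + α ≠ 0 := by
    intro α hα h
    have h1 : ‖dC‖ = ‖-α‖ := by rw [eq_neg_of_add_eq_zero_left h]
    rw [norm_neg] at h1
    rw [habs_d] at h1; linarith
  have hVopen : IsOpen {z : ℂ | dC + z ≠ 0} := by
    have : Continuous fun z : ℂ => dC + z := by continuity
    exact isOpen_compl_singleton.preimage this
  have hdiff : DifferentiableOn ℂ φ {z : ℂ | dC + z ≠ 0} := by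
    intro z hz
    exact ((differentiableAt_id.neg.mul (differentiableAt_const _)).div
      (((differentiableAt_const dC).add differentiableAt_id).pow Δ)
      (pow_ne_zero _ hz)).differentiableWithinAt
  have hA : AnalyticOnNhd ℂ φ {z : ℂ | dC + z ≠ 0} := hdiff.analyticOnNhd hVopen
  have hsub : Metric.closedBall (0 : ℂ) 1 ⊆ {z : ℂ | dC + z ≠ 0} := by
    intro z hz
    exact hne z (by simpa using Metric.mem_closedBall.mp hz)
  -- key boundary bound
  have hbound : ∀ α : ℂ, ‖α‖ = 1 → m ≤ ‖φ α‖ := by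
    intro α hα
    have h1 : ‖dC + α‖ ≤ (Δ : ℝ) := by
      calc ‖dC + α‖ ≤ ‖dC‖ + ‖α‖ := norm_add_le _ _
        _ = (Δ : ℝ) := by rw [habs_d, hα]; ring
    have h2 : (0 : ℝ) < ‖dC + α‖ := by
      exact norm_pos_iff.mpr (hne α hα.le)
    have h3 : ‖φ α‖
        = ((Δ : ℝ) - 1) ^ (Δ - 1) / ‖dC + α‖ ^ Δ := by
      rw [hφdef]
      simp only [norm_div, norm_mul, norm_pow, norm_neg, hα, habs_d, one_mul]
    rw [h3, hm]
    have hnum : (0 : ℝ) < ((Δ : ℝ) - 1) ^ (Δ - 1) := pow_pos (by linarith) _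
    apply div_le_div_of_nonneg_left hnum.le (by positivity)
    exact pow_le_pow_left₀ h2.le h1 Δ
  -- φ is open on the unit ball
  have hAball : AnalyticOnNhd ℂ φ (Metric.ball (0 : ℂ) 1) :=
    hA.mono ((Metric.ball_subset_closedBall).trans hsub)
  have hopen : IsOpen (φ '' Metric.ball (0 : ℂ) 1) := by
    rcases hAball.is_constant_or_isOpen (convex_ball _ _).isPreconnected with h | h
    · exfalso
      obtain ⟨c, hc⟩ := h
      have h0 : φ 0 = c := hc 0 (by simp)
      have hhalf : φ (1/2) = c := hc (1/2) (by norm_num [Complex.norm_ofNat])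
      have : φ 0 = 0 := by simp [hφdef]
      rw [this] at h0
      have : φ (1/2) ≠ 0 := by
        apply div_ne_zero
        · exact mul_ne_zero (by norm_num) (pow_ne_zero _ hdC0)
        · exact pow_ne_zero _ (hne (1/2) (by norm_num [Complex.norm_ofNat]))
      rw [hhalf, ← h0] at this
      exact this rfl
    · exact h _ (le_refl _) Metric.isOpen_ball
  -- the image of the closed ball is compact
  have hK : IsCompact (φ '' Metric.closedBall (0 : ℂ) 1) :=
    (isCompact_closedBall _ _).image_of_continuousOn
      ((hdiff.continuousOn).mono hsub)
  have hm0 : 0 < m := by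
    rw [hm]; exact div_pos (pow_pos (by linarith) _) (pow_pos (by linarith) _)
  -- connectedness argument
  have key : Metric.ball (0 : ℂ) m ⊆ φ '' Metric.ball (0 : ℂ) 1 := by
    apply IsPreconnected.subset_left_of_subset_union hopen hK.isClosed.isOpen_compl
    · -- disjoint
      refine Set.disjoint_left.mpr fun x hx hx' => hx' ?_
      exact Set.image_mono Metric.ball_subset_closedBall hx
    · -- ball ⊆ union
      intro x hx
      by_cases hxK : x ∈ φ '' Metric.closedBall (0 : ℂ) 1
      · left
        obtain ⟨α, hα, rfl⟩ := hxK
        have hα1 : ‖α‖ ≤ 1 := by simpa using Metric.mem_closedBall.mp hα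
        rcases lt_or_eq_of_le hα1 with h | h
        · exact ⟨α, by simpa using h, rfl⟩
        · exfalso
          have := hbound α h
          have hxlt : ‖φ α‖ < m := by simpa using Metric.mem_ball.mp hx
          linarith
      · right; exact hxK
    · -- nonempty intersection
      refine ⟨0, Metric.mem_ball_self hm0, 0, by simp, by simp [hφdef]⟩
    · exact (convex_ball _ _).isPreconnected
  have hwmem : w ∈ φ '' Metric.ball (0 : ℂ) 1 := key (by simpa using hw)
  obtain ⟨α, hα, hαw⟩ := hwmem
  exact ⟨α, by simpa using Metric.mem_ball.mp hα, hαw.symm⟩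
end
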